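/- Let d ∈ ℕ and α, β > 0. There exists a constant C > 0, depending only on d, α, β (and not on the simplex), such that for every d-simplex T ⊂ ℝ^d of unit volume, E_{∞;α,β}(T) ≥ C · (diam T)², where diam T is the Euclidean diameter of T. -/

import Mathlib

set_option maxHeartbeats 1000000

open MeasureTheory Metric Set

/-- The asymmetric uniform error of best approximation of `Q(x) = ∑ xⱼ²` by affine
functions `x ↦ ⟪a, x⟫ + c` on the set `T ⊆ ℝ^d`. -/
noncomputable def EinfAB (d : ℕ) (α β : ℝ) (T : Set (EuclideanSpace ℝ (Fin d))) : ℝ :=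
  ⨅ (a : EuclideanSpace ℝ (Fin d)) (c : ℝ),
    ⨆ x : T,
      (α * max ((∑ j, x.1 j ^ 2) - ((inner ℝ a x.1 : ℝ) + c)) 0 +
        β * max (-((∑ j, x.1 j ^ 2) - ((inner ℝ a x.1 : ℝ) + c))) 0)

private theorem exists_dist_eq_diam' {E : Type*} [MetricSpace E] (T : Set E)
    (hTc : IsCompact T) (hTne : T.Nonempty) :
    ∃ x ∈ T, ∃ y ∈ T, dist x y = Metric.diam T := by
  obtain ⟨⟨x, y⟩, ⟨hx, hy⟩, hmax⟩ :=
    (hTc.prod hTc).exists_isMaxOn (hTne.prod hTne) (continuous_dist.continuousOn)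
  refine ⟨x, hx, y, hy, le_antisymm (Metric.dist_le_diam_of_mem hTc.isBounded hx hy)
    (Metric.diam_le_of_forall_dist_le dist_nonneg ?_)⟩
  intro p hp q hq
  exact hmax (Set.mk_mem_prod hp hq)

/-- There is a constant `C > 0`, depending only on `d`, `α`, `β`, such that the
asymmetric uniform error of best affine approximation of `Q` on any unit-volume
`d`-simplex `T` is at least `C * (diam T)²`. -/
theorem asymmetric_uniform_error_lower_bound_diam
    (d : ℕ) (hd : 0 < d) (α β : ℝ) (hα : 0 < α) (hβ : 0 < β) :
    ∃ C : ℝ, 0 < C ∧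
      ∀ v : Fin (d + 1) → EuclideanSpace ℝ (Fin d),
        AffineIndependent ℝ v →
        volume (convexHull ℝ (Set.range v)) = 1 →
        EinfAB d α β (convexHull ℝ (Set.range v)) ≥
          C * (Metric.diam (convexHull ℝ (Set.range v))) ^ 2 := by
  refine ⟨min α β / 8, by positivity, ?_⟩
  intro v hv hvol
  set T : Set (EuclideanSpace ℝ (Fin d)) := convexHull ℝ (Set.range v) with hT
  have hQ : ∀ z : EuclideanSpace ℝ (Fin d), (∑ j, z j ^ 2) = ‖z‖ ^ 2 := by
    intro z
    rw [EuclideanSpace.norm_eq, Real.sq_sqrt (Finset.sum_nonneg fun i _ => sq_nonneg _)]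
    simp [Real.norm_eq_abs, sq_abs]
  have hTc : IsCompact T := (Set.finite_range v).isCompact_convexHull ℝ
  have hconv : Convex ℝ T := convex_convexHull ℝ _
  have hv0 : v 0 ∈ T := subset_convexHull ℝ _ ⟨0, rfl⟩
  have hTne : T.Nonempty := ⟨v 0, hv0⟩
  -- diameter attained
  obtain ⟨x, hx, y, hy, hdist⟩ := exists_dist_eq_diam' T hTc hTne
  have hdiam : Metric.diam T = dist x y := hdist.symm
  set D : ℝ := Metric.diam T with hD
  have hD0 : 0 ≤ D := Metric.diam_nonneg
  rw [ge_iff_le, EinfAB]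
  refine le_ciInf fun a => le_ciInf fun c => ?_
  set e : EuclideanSpace ℝ (Fin d) → ℝ :=
    fun z => ‖z‖ ^ 2 - ((inner ℝ a z : ℝ) + c) with he
  set F : EuclideanSpace ℝ (Fin d) → ℝ :=
    fun z => α * max (e z) 0 + β * max (-(e z)) 0 with hF
  have hFcont : Continuous F := by
    have h1 : Continuous e := by
      apply Continuous.sub
      · exact (continuous_norm.pow 2)
      · exact ((continuous_const.inner continuous_id).add continuous_const)
    exact ((continuous_const.mul (h1.max continuous_const)).add
      (continuous_const.mul (h1.neg.max continuous_const)))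
  have hbdd : BddAbove (Set.range fun x : T =>
      (α * max ((∑ j, x.1 j ^ 2) - ((inner ℝ a x.1 : ℝ) + c)) 0 +
        β * max (-((∑ j, x.1 j ^ 2) - ((inner ℝ a x.1 : ℝ) + c))) 0)) := by
    have : (Set.range fun x : T =>
        (α * max ((∑ j, x.1 j ^ 2) - ((inner ℝ a x.1 : ℝ) + c)) 0 +
          β * max (-((∑ j, x.1 j ^ 2) - ((inner ℝ a x.1 : ℝ) + c))) 0)) = F '' T := by
      rw [Set.image_eq_range]
      refine funext fun z => ?_
      simp only [hF, he, hQ]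
    rw [this]
    exact (hTc.image hFcont).bddAbove
  -- key identity
  set m : EuclideanSpace ℝ (Fin d) := midpoint ℝ x y with hm
  have hmT : m ∈ T := hconv.segment_subset hx hy (midpoint_mem_segment x y)
  have hpar : ‖x + y‖ ^ 2 + ‖x - y‖ ^ 2 = 2 * (‖x‖ ^ 2 + ‖y‖ ^ 2) := by
    have := parallelogram_law_with_norm ℝ x y
    nlinarith [this]
  have hinner_m : (inner ℝ a m : ℝ) = ((inner ℝ a x : ℝ) + (inner ℝ a y : ℝ)) / 2 := by
    rw [hm, midpoint_eq_smul_add, inner_smul_right, inner_add_right]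
    norm_num
    ring
  have hnorm_m : ‖m‖ ^ 2 = ‖x + y‖ ^ 2 / 4 := by
    rw [hm, midpoint_eq_smul_add, norm_smul]
    norm_num
    ring
  have hkey : e x + e y - 2 * e m = D ^ 2 / 2 := by
    have hdxy : D = ‖x - y‖ := hdiam.trans (dist_eq_norm x y)
    rw [hdxy]
    simp only [he, hinner_m, hnorm_m]
    nlinarith [hpar]
  -- find a good point
  have hmain : ∃ p ∈ T, min α β / 8 * D ^ 2 ≤ F p := by
    by_cases h1 : D ^ 2 / 8 ≤ e x
    · refine ⟨x, hx, ?_⟩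
      have : min α β / 8 * D ^ 2 ≤ α * max (e x) 0 := by
        have h2 : D ^ 2 / 8 ≤ max (e x) 0 := le_trans h1 (le_max_left _ _)
        have h3 : min α β ≤ α := min_le_left _ _
        nlinarith [le_max_right (e x) (0:ℝ), sq_nonneg D]
      have h4 : 0 ≤ β * max (-(e x)) 0 := by positivity
      simp only [hF]; linarith
    · by_cases h2 : D ^ 2 / 8 ≤ e y
      · refine ⟨y, hy, ?_⟩
        have : min α β / 8 * D ^ 2 ≤ α * max (e y) 0 := by
          have h2' : D ^ 2 / 8 ≤ max (e y) 0 := le_trans h2 (le_max_left _ _)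
          have h3 : min α β ≤ α := min_le_left _ _
          nlinarith [le_max_right (e y) (0:ℝ), sq_nonneg D]
        have h4 : 0 ≤ β * max (-(e y)) 0 := by positivity
        simp only [hF]; linarith
      · refine ⟨m, hmT, ?_⟩
        push_neg at h1 h2
        have hem : D ^ 2 / 8 ≤ -(e m) := by nlinarith [hkey]
        have : min α β / 8 * D ^ 2 ≤ β * max (-(e m)) 0 := by
          have h2' : D ^ 2 / 8 ≤ max (-(e m)) 0 := le_trans hem (le_max_left _ _)
          have h3 : min α β ≤ β := min_le_right _ _
          nlinarith [le_max_right (-(e m)) (0:ℝ), sq_nonneg D]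
        have h4 : 0 ≤ α * max (e m) 0 := by positivity
        simp only [hF]; linarith
  obtain ⟨p, hpT, hp⟩ := hmain
  refine le_trans hp ?_
  have := le_ciSup hbdd (⟨p, hpT⟩ : T)
  refine le_trans (le_of_eq ?_) this
  simp only [hF, he, hQ]
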